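/- Fix r₀ > 0, n ≥ 1, and let Γⁱ : ℝⁿ × ℝⁿ → ℝ be continuous functions, positively homogeneous of degree 2 in the second argument, with |Γⁱ(x,y)| < K for all i whenever |x| ≤ r₀ and |y| = 1 (Euclidean norms). Let γ be a C² curve satisfying γ̈ⁱ = −2Γⁱ(γ, γ̇) with |γ̇(0)| = 1, |γ(0)| = r for some 0 < r ≤ r₀ with r < 1/(2nK), and ⟨γ(0), γ̇(0)⟩ = 0. Then the function V(s) = |γ(s)|² − r² satisfies V(0) = 0, V'(0) = 0 and V''(0) > 0; hence V(s) > 0 for all s ≠ 0 in some punctured neighbourhood of 0. -/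

import Mathlib

open scoped RealInnerProductSpace

theorem whitehead_convexity_estimate (n : ℕ) (hn : 1 ≤ n)
    (r₀ K r : ℝ) (hr₀ : 0 < r₀) (hK : 0 < K)
    (Γ : EuclideanSpace ℝ (Fin n) → EuclideanSpace ℝ (Fin n) → Fin n → ℝ)
    (hΓcont : Continuous fun p : EuclideanSpace ℝ (Fin n) × EuclideanSpace ℝ (Fin n) => Γ p.1 p.2)
    (hΓhom : ∀ (x y : EuclideanSpace ℝ (Fin n)) (k : ℝ), 0 < k →
      ∀ i, Γ x (k • y) i = k ^ 2 * Γ x y i)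
    (hΓbound : ∀ (i : Fin n) (x y : EuclideanSpace ℝ (Fin n)),
      ‖x‖ ≤ r₀ → ‖y‖ = 1 → |Γ x y i| < K)
    (γ : ℝ → EuclideanSpace ℝ (Fin n))
    (hγ : ContDiff ℝ 2 γ)
    (hode : ∀ (s : ℝ) (i : Fin n),
      deriv (deriv fun t => γ t i) s = -2 * Γ (γ s) (deriv γ s) i)
    (hspeed : ‖deriv γ 0‖ = 1)
    (hrpos : 0 < r) (hrle : r ≤ r₀) (hrK : r < 1 / (2 * n * K))
    (hinit : ‖γ 0‖ = r)
    (horth : ⟪γ 0, deriv γ 0⟫ = 0) :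
    (‖γ 0‖ ^ 2 - r ^ 2 = 0) ∧
    deriv (fun s => ‖γ s‖ ^ 2 - r ^ 2) 0 = 0 ∧
    0 < deriv (deriv fun s => ‖γ s‖ ^ 2 - r ^ 2) 0 ∧
    ∃ ε > 0, ∀ s : ℝ, s ≠ 0 → |s| < ε → 0 < ‖γ s‖ ^ 2 - r ^ 2 := by
  -- norms squared as sums
  have hnorm : ∀ x : EuclideanSpace ℝ (Fin n), ‖x‖ ^ 2 = ∑ i, (x i) ^ 2 := by
    intro x
    rw [EuclideanSpace.norm_eq, Real.sq_sqrt (by positivity)]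
    simp [Real.norm_eq_abs, sq_abs]
  have hγd : Differentiable ℝ γ := hγ.differentiable two_ne_zero
  -- coordinate functions
  have hfi_has : ∀ (i : Fin n) (s : ℝ), HasDerivAt (fun t => γ t i) (deriv γ s i) s := by
    intro i s
    have h := (hγd s).hasDerivAt
    have h2 := ((EuclideanSpace.proj (𝕜 := ℝ) i).hasFDerivAt (x := γ s)).comp_hasDerivAt s h
    exact h2
  have hfiC : ∀ i : Fin n, ContDiff ℝ 2 (fun t => γ t i) := by
    intro i
    exact (EuclideanSpace.proj (𝕜 := ℝ) i).contDiff.comp hγ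
  have hfi'd : ∀ i : Fin n, Differentiable ℝ (deriv fun t => γ t i) := by
    intro i
    have h : ContDiff ℝ ((1 : WithTop ℕ∞) + 1) (fun t => γ t i) := by
      have := hfiC i; norm_num at this ⊢; exact this
    exact ((contDiff_succ_iff_deriv.mp h).2.2).differentiable one_ne_zero
  have hfi''_has : ∀ (i : Fin n) (s : ℝ),
      HasDerivAt (deriv fun t => γ t i) (-2 * Γ (γ s) (deriv γ s) i) s := by
    intro i s
    have h := (hfi'd i s).hasDerivAt
    rwa [hode s i] at h
  -- the function V rewritten
  set G : ℝ → ℝ := fun s => (∑ i, (γ s i) ^ 2) - r ^ 2 with hGdef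
  have hVG : (fun s => ‖γ s‖ ^ 2 - r ^ 2) = G := by
    funext s; rw [hnorm]
  -- first derivative
  set W : ℝ → ℝ := fun s => ∑ i, 2 * (γ s i * deriv (fun t => γ t i) s) with hWdef
  have hG1 : ∀ s, HasDerivAt G (W s) s := by
    intro s
    have h : HasDerivAt (fun t => ∑ i, (γ t i) ^ 2)
        (∑ i, 2 * (γ s i * deriv (fun t => γ t i) s)) s := by
      have h2 := HasDerivAt.fun_sum (u := Finset.univ)
        (fun i _ => ((hfi_has i s).pow 2))
      refine HasDerivAt.congr_deriv h2 ?_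
      refine Finset.sum_congr rfl fun i _ => ?_
      rw [(hfi_has i s).deriv]
      push_cast; ring
    exact h.sub_const (r ^ 2)
  have hGdiff : Differentiable ℝ G := fun s => (hG1 s).differentiableAt
  have hderivG : deriv G = W := funext fun s => (hG1 s).deriv
  -- W 0 = 0
  have hinner : (∑ i, γ 0 i * deriv γ 0 i) = 0 := by
    have := horth
    rw [PiLp.inner_apply] at this
    simpa [RCLike.inner_apply, mul_comm] using this
  have hW0 : W 0 = 0 := by
    simp only [hWdef]
    have : ∀ i : Fin n, 2 * (γ 0 i * deriv (fun t => γ t i) 0)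
        = 2 * (γ 0 i * deriv γ 0 i) := by
      intro i; rw [(hfi_has i 0).deriv]
    rw [Finset.sum_congr rfl fun i _ => this i, ← Finset.mul_sum, hinner]
    norm_num
  -- second derivative
  set D : ℝ := ∑ i, 2 * (deriv γ 0 i * deriv γ 0 i
      + γ 0 i * (-2 * Γ (γ 0) (deriv γ 0) i)) with hDdef
  have hW1 : HasDerivAt W D 0 := by
    apply HasDerivAt.fun_sum
    intro i _
    have hm := (hfi_has i 0).mul (hfi''_has i 0)
    have hm2 := hm.const_mul (2 : ℝ)
    rw [(hfi_has i 0).deriv] at hm2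
    convert hm2 using 1 <;> rfl
  -- positivity of D
  have hcoord : ∀ (x : EuclideanSpace ℝ (Fin n)) (i : Fin n), |x i| ≤ ‖x‖ := by
    intro x i
    have h1 : (x i) ^ 2 ≤ ‖x‖ ^ 2 := by
      rw [hnorm]
      exact Finset.single_le_sum (fun j _ => sq_nonneg (x j)) (Finset.mem_univ i)
    calc |x i| = Real.sqrt ((x i) ^ 2) := (Real.sqrt_sq_eq_abs _).symm
      _ ≤ Real.sqrt (‖x‖ ^ 2) := Real.sqrt_le_sqrt h1
      _ = ‖x‖ := by rw [Real.sqrt_sq (norm_nonneg x)]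
  have hΓb : ∀ i : Fin n, |Γ (γ 0) (deriv γ 0) i| ≤ K :=
    fun i => le_of_lt (hΓbound i _ _ (by rw [hinit]; exact hrle) hspeed)
  have hS : |∑ i, γ 0 i * Γ (γ 0) (deriv γ 0) i| ≤ n * (r * K) := by
    calc |∑ i, γ 0 i * Γ (γ 0) (deriv γ 0) i|
        ≤ ∑ i, |γ 0 i * Γ (γ 0) (deriv γ 0) i| := Finset.abs_sum_le_sum_abs _ _
      _ ≤ ∑ _i : Fin n, r * K := by
          refine Finset.sum_le_sum fun i _ => ?_
          rw [abs_mul]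
          refine mul_le_mul ?_ (hΓb i) (abs_nonneg _) (le_of_lt hrpos)
          calc |γ 0 i| ≤ ‖γ 0‖ := hcoord _ i
            _ = r := hinit
      _ = n * (r * K) := by rw [Finset.sum_const, Finset.card_univ, Fintype.card_fin,
          nsmul_eq_mul]
  have hnrK : (n : ℝ) * (r * K) < 1 / 2 := by
    have hn2 : (0 : ℝ) < 2 * n * K := by positivity
    rw [lt_div_iff₀ hn2] at hrK
    nlinarith
  have hD : 0 < D := by
    have hDeq : D = 2 * (∑ i, (deriv γ 0 i) ^ 2)
        - 4 * (∑ i, γ 0 i * Γ (γ 0) (deriv γ 0) i) := by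
      rw [hDdef, Finset.mul_sum, Finset.mul_sum, ← Finset.sum_sub_distrib]
      refine Finset.sum_congr rfl fun i _ => ?_
      ring
    have h1 : (∑ i, (deriv γ 0 i) ^ 2) = 1 := by
      rw [← hnorm, hspeed]; norm_num
    have h2 : -(1/2 : ℝ) < -|∑ i, γ 0 i * Γ (γ 0) (deriv γ 0) i| := by
      have := lt_of_le_of_lt hS hnrK
      linarith
    have h3 := neg_abs_le (∑ i, γ 0 i * Γ (γ 0) (deriv γ 0) i)
    have h4 : (∑ i, γ 0 i * Γ (γ 0) (deriv γ 0) i) < 1/2 :=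
      lt_of_le_of_lt (le_abs_self _) (lt_of_le_of_lt hS hnrK)
    rw [hDeq, h1]
    linarith
  -- conclusions
  have hG0 : G 0 = 0 := by
    simp only [hGdef, ← hnorm, hinit]; ring
  have c1 : ‖γ 0‖ ^ 2 - r ^ 2 = 0 := by rw [hinit]; ring
  have c2 : deriv (fun s => ‖γ s‖ ^ 2 - r ^ 2) 0 = 0 := by
    rw [hVG, hderivG, hW0]
  have c3 : 0 < deriv (deriv fun s => ‖γ s‖ ^ 2 - r ^ 2) 0 := by
    rw [hVG, hderivG, hW1.deriv]; exact hD
  refine ⟨c1, c2, c3, ?_⟩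
  -- punctured neighborhood positivity
  have htend : Filter.Tendsto (slope W 0) (nhdsWithin 0 {(0:ℝ)}ᶜ) (nhds D) :=
    hasDerivAt_iff_tendsto_slope.mp hW1
  have hev : ∀ᶠ s in nhdsWithin 0 {(0:ℝ)}ᶜ, 0 < slope W 0 s :=
    htend.eventually (eventually_gt_nhds hD)
  rw [eventually_nhdsWithin_iff, Metric.eventually_nhds_iff] at hev
  obtain ⟨ε, hε, hball⟩ := hev
  have hWpos : ∀ c : ℝ, c ≠ 0 → |c| < ε → 0 < W c / c := by
    intro c hc0 hcε
    have := hball (show dist c 0 < ε by simpa [Real.dist_eq] using hcε) (by simpa using hc0)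
    rwa [slope_def_field, hW0, sub_zero, sub_zero, div_eq_mul_inv, ← div_eq_mul_inv] at this
  refine ⟨ε, hε, fun s hs0 hsε => ?_⟩
  rw [show (‖γ s‖ ^ 2 - r ^ 2) = G s from by rw [hnorm]]
  rcases lt_or_gt_of_ne hs0 with hneg | hpos
  · -- s < 0
    obtain ⟨c, hc, hceq⟩ := exists_hasDerivAt_eq_slope G W hneg
      hGdiff.continuous.continuousOn (fun x _ => hG1 x)
    have hc0 : c ≠ 0 := ne_of_lt hc.2
    have hcε : |c| < ε := by
      rw [abs_of_neg (hc.2)]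
      calc -c < -s := by linarith [hc.1]
        _ = |s| := (abs_of_neg hneg).symm
        _ < ε := hsε
    have hWc := hWpos c hc0 hcε
    have hWcneg : W c < 0 := by
      by_contra h
      push_neg at h
      have : W c / c ≤ 0 := div_nonpos_of_nonneg_of_nonpos h (le_of_lt hc.2)
      linarith
    rw [hG0] at hceq
    rw [eq_div_iff (by linarith : (0:ℝ) - s ≠ 0)] at hceq
    -- hceq : W c = ... ⇒ 0 - G s = W c * (0 - s)
    nlinarith [hceq]
  · -- s > 0
    obtain ⟨c, hc, hceq⟩ := exists_hasDerivAt_eq_slope G W hpos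
      hGdiff.continuous.continuousOn (fun x _ => hG1 x)
    have hc0 : c ≠ 0 := ne_of_gt hc.1
    have hcε : |c| < ε := by
      rw [abs_of_pos hc.1]
      calc c < s := hc.2
        _ = |s| := (abs_of_pos hpos).symm
        _ < ε := hsε
    have hWc := hWpos c hc0 hcε
    have hWcpos : 0 < W c := by
      by_contra h
      push_neg at h
      have : W c / c ≤ 0 := div_nonpos_of_nonpos_of_nonneg h (le_of_lt hc.1)
      linarith
    rw [hG0] at hceq
    rw [eq_div_iff (by linarith : s - 0 ≠ 0)] at hceq
    nlinarith [hceq]
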